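/- In the category Grphs of multigraphs with graph morphisms, a morphism f : A → B is an epimorphism if and only if its part-set function f_P : P(A) → P(B) is surjective, and f is a monomorphism if and only if f_P is injective. -/

import Mathlib

/-- A multigraph: a vertex type, an edge type, and an incidence function
assigning to each edge an unordered pair of vertices. -/
structure Multigraph : Type 1 where
  V : Type
  E : Type
  ψ : E → Sym2 V

namespace Multigraph

/-- The part set of a multigraph: vertices together with edges. -/
abbrev Part (G : Multigraph) : Type := G.V ⊕ G.E

/-- The incidence function extended to parts: a vertex `v` is incident to `{v,v}`. -/
def incid (G : Multigraph) : G.Part → Sym2 G.V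
  | Sum.inl v => s(v, v)
  | Sum.inr e => G.ψ e

/-- A graph morphism: a function on part sets mapping vertices to vertices and
preserving incidence.  (The vertex map is recorded separately, but it is uniquely
determined by the part map.) -/
@[ext]
structure Hom (G H : Multigraph) where
  partMap : G.Part → H.Part
  vertMap : G.V → H.V
  partMap_vert : ∀ v : G.V, partMap (Sum.inl v) = Sum.inl (vertMap v)
  incid_partMap : ∀ p : G.Part, H.incid (partMap p) = (G.incid p).map vertMap

/-- The identity graph morphism. -/
def Hom.id (G : Multigraph) : Hom G G where
  partMap := _root_.id
  vertMap := _root_.id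
  partMap_vert := fun _ => rfl
  incid_partMap := fun p => by simp

/-- Composition of graph morphisms. -/
def Hom.comp {G H K : Multigraph} (g : Hom H K) (f : Hom G H) : Hom G K where
  partMap := g.partMap ∘ f.partMap
  vertMap := g.vertMap ∘ f.vertMap
  partMap_vert := fun v => by simp [f.partMap_vert, g.partMap_vert]
  incid_partMap := fun p => by
    simp [Function.comp, g.incid_partMap, f.incid_partMap, Sym2.map_map]

/-- A strict graph morphism: a graph morphism that moreover maps edges to edges. -/
@[ext]
structure StrictHom (G H : Multigraph) extends Hom G H where
  edgeMap : G.E → H.E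
  partMap_edge : ∀ e : G.E, partMap (Sum.inr e) = Sum.inr (edgeMap e)

/-- The identity strict graph morphism. -/
def StrictHom.id (G : Multigraph) : StrictHom G G where
  toHom := Hom.id G
  edgeMap := _root_.id
  partMap_edge := fun _ => rfl

/-- Composition of strict graph morphisms. -/
def StrictHom.comp {G H K : Multigraph} (g : StrictHom H K) (f : StrictHom G H) :
    StrictHom G K where
  toHom := g.toHom.comp f.toHom
  edgeMap := g.edgeMap ∘ f.edgeMap
  partMap_edge := fun e => by
    simp [Hom.comp, f.partMap_edge, g.partMap_edge]

end Multigraph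


namespace Multigraph

/-- A hom is determined by its part map. -/
theorem Hom.ext_partMap {G H : Multigraph} {f g : Hom G H}
    (h : f.partMap = g.partMap) : f = g := by
  have hv : f.vertMap = g.vertMap := by
    funext v
    have h1 := f.partMap_vert v
    have h2 := g.partMap_vert v
    rw [h] at h1
    rw [h1] at h2
    exact Sum.inl.inj h2
  exact Hom.ext h hv

theorem sym2_map_const {α β : Type} (z : Sym2 α) (c : β) :
    z.map (fun _ => c) = s(c, c) := by
  induction z using Sym2.ind with
  | _ x y => simp

/-- The one-point graph. -/
def pointGraph : Multigraph where
  V := Unit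
  E := Empty
  ψ := Empty.elim

/-- The morphism from the point graph picking out a vertex. -/
def pointHom (G : Multigraph) (v : G.V) : Hom pointGraph G where
  partMap := fun _ => Sum.inl v
  vertMap := fun _ => v
  partMap_vert := fun _ => rfl
  incid_partMap := fun p => by
    cases p with
    | inl u => simp [incid, pointGraph, sym2_map_const]
    | inr e => exact e.elim

/-- The walking edge graph. -/
def edgeGraph : Multigraph where
  V := Bool
  E := Unit
  ψ := fun _ => s(false, true)

/-- The morphism from the walking edge picking out an edge with given endpoints. -/
def edgeHom (G : Multigraph) (e : G.E) (x y : G.V) (hxy : G.ψ e = s(x, y)) :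
    Hom edgeGraph G where
  partMap := fun p => match p with
    | Sum.inl b => Sum.inl (bif b then y else x)
    | Sum.inr _ => Sum.inr e
  vertMap := fun b => bif b then y else x
  partMap_vert := fun _ => rfl
  incid_partMap := fun p => by
    cases p with
    | inl b => cases b <;> simp [incid, edgeGraph]
    | inr u => simp [incid, edgeGraph, hxy]

/-- The morphism from the walking edge collapsing everything to a vertex. -/
def collapseHom (G : Multigraph) (v : G.V) : Hom edgeGraph G where
  partMap := fun _ => Sum.inl v
  vertMap := fun _ => v
  partMap_vert := fun _ => rfl
  incid_partMap := fun p => by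
    cases p with
    | inl b => simp [incid, edgeGraph, sym2_map_const]
    | inr u => simp [incid, edgeGraph]

end Multigraph

open Multigraph in
/-- In the category **Grphs** of multigraphs with graph morphisms, a morphism is an
epimorphism iff its part-set function is surjective, and a monomorphism iff its
part-set function is injective. -/
theorem grphs_epi_iff_surjective_and_mono_iff_injective
    (A B : Multigraph) (f : Hom A B) :
    ((∀ (C : Multigraph) (g h : Hom B C), g.comp f = h.comp f → g = h) ↔
      Function.Surjective f.partMap) ∧
    ((∀ (C : Multigraph) (g h : Hom C A), f.comp g = f.comp h → g = h) ↔
      Function.Injective f.partMap) := by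
  constructor
  · constructor
    · -- epi → surjective
      intro hepi
      by_contra hns
      rw [Function.Surjective] at hns
      push_neg at hns
      obtain ⟨b, hb⟩ := hns
      -- classifying graph
      set C : Multigraph := ⟨Prop, Sym2 Prop × Prop, Prod.fst⟩ with hC
      set χ : B.V → Prop := fun w => ∃ p, f.partMap p = Sum.inl w with hχ
      set g : Hom B C := {
        partMap := fun p => match p with
          | Sum.inl w => Sum.inl (χ w)
          | Sum.inr e => Sum.inr ((B.ψ e).map χ, ∃ p, f.partMap p = Sum.inr e)
        vertMap := χ
        partMap_vert := fun _ => rfl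
        incid_partMap := fun p => by
          cases p with
          | inl w => simp [incid]
          | inr e => simp [incid]; rfl } with hg
      set h : Hom B C := {
        partMap := fun p => match p with
          | Sum.inl _ => Sum.inl True
          | Sum.inr _ => Sum.inr (s(True, True), True)
        vertMap := fun _ => True
        partMap_vert := fun _ => rfl
        incid_partMap := fun p => by
          cases p with
          | inl w => simp [incid]
          | inr e => simp [incid, sym2_map_const]; rfl } with hh
      have hgh : g = h := by
        apply hepi
        apply Hom.ext_partMap
        funext p
        cases p with
        | inl v =>
          have : χ (f.vertMap v) = True :=
            eq_true ⟨Sum.inl v, f.partMap_vert v⟩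
          simp [Hom.comp, hg, hh, f.partMap_vert, this]
        | inr a =>
          rcases hfa : f.partMap (Sum.inr a) with w | e
          · have : χ w = True := eq_true ⟨Sum.inr a, hfa⟩
            simp [Hom.comp, hg, hh, hfa, this]
          · have hflag : (∃ p, f.partMap p = Sum.inr e) = True :=
              eq_true ⟨Sum.inr a, hfa⟩
            have hψ : B.ψ e = (A.ψ a).map f.vertMap := by
              have := f.incid_partMap (Sum.inr a)
              rw [hfa] at this
              exact this
            have hmap : (B.ψ e).map χ = s(True, True) := by
              rw [hψ, Sym2.map_map]
              have : (χ ∘ f.vertMap) = fun _ => True := by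
                funext x
                exact eq_true ⟨Sum.inl x, f.partMap_vert x⟩
              rw [this, sym2_map_const]
            simp only [Hom.comp, hg, hh, hfa, Function.comp, hflag, hmap]
      -- evaluate g = h at the missed part b
      have hpm := congrArg Hom.partMap hgh
      cases b with
      | inl w =>
        have := congrFun hpm (Sum.inl w)
        simp only [hg, hh] at this
        have hw : χ w = True := Sum.inl.inj this
        obtain ⟨p, hp⟩ := of_eq_true hw
        exact hb p hp
      | inr e =>
        have := congrFun hpm (Sum.inr e)
        simp only [hg, hh] at this
        have h2 : (∃ p, f.partMap p = Sum.inr e) = True := by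
          have := (Sum.inr.injEq _ _).mp this
          exact (Prod.mk.injEq _ _ _ _ |>.mp this).2
        obtain ⟨p, hp⟩ := of_eq_true h2
        exact hb p hp
    · -- surjective → epi
      intro hsurj C g h hgh
      apply Hom.ext_partMap
      funext b
      obtain ⟨p, rfl⟩ := hsurj b
      exact congrFun (congrArg Hom.partMap hgh) p
  · constructor
    · -- mono → injective
      intro hmono p q hpq
      -- key: equal vertMap images
      cases p with
      | inl v =>
        cases q with
        | inl v' =>
          have hfv : f.vertMap v = f.vertMap v' := by
            have h1 := f.partMap_vert v
            have h2 := f.partMap_vert v'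
            rw [hpq] at h1; rw [h1] at h2
            exact Sum.inl.inj h2
          have := hmono pointGraph (pointHom A v) (pointHom A v')
            (by
              apply Hom.ext_partMap
              funext p
              simp [Hom.comp, pointHom, hpq])
          have := congrFun (congrArg Hom.partMap this) (Sum.inl ())
          simpa [pointHom] using this
        | inr e =>
          obtain ⟨⟨x, y⟩, hxy⟩ := Quot.exists_rep (A.ψ e)
          have hxy : A.ψ e = s(x, y) := hxy.symm
          have hev : s(f.vertMap x, f.vertMap y) = s(f.vertMap v, f.vertMap v) := by
            have h1 := f.incid_partMap (Sum.inr e)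
            rw [← hpq, f.partMap_vert v] at h1
            simp only [incid, hxy, Sym2.map_pair_eq] at h1
            exact h1.symm
          rw [Sym2.eq_iff] at hev
          have hx : f.vertMap x = f.vertMap v := by tauto
          have hy : f.vertMap y = f.vertMap v := by tauto
          have := hmono edgeGraph (collapseHom A v) (edgeHom A e x y hxy)
            (by
              apply Hom.ext_partMap
              funext p
              rcases p with b | u
              · cases b <;>
                  simp [Hom.comp, collapseHom, edgeHom, f.partMap_vert, hx, hy]
              · simp [Hom.comp, collapseHom, edgeHom, hpq])
          have := congrFun (congrArg Hom.partMap this) (Sum.inr ())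
          simpa [collapseHom, edgeHom] using this
      | inr e =>
        cases q with
        | inl v =>
          obtain ⟨⟨x, y⟩, hxy⟩ := Quot.exists_rep (A.ψ e)
          have hxy : A.ψ e = s(x, y) := hxy.symm
          have hev : s(f.vertMap x, f.vertMap y) = s(f.vertMap v, f.vertMap v) := by
            have h1 := f.incid_partMap (Sum.inr e)
            rw [hpq, f.partMap_vert v] at h1
            simp only [incid, hxy, Sym2.map_pair_eq] at h1
            exact h1.symm
          rw [Sym2.eq_iff] at hev
          have hx : f.vertMap x = f.vertMap v := by tauto
          have hy : f.vertMap y = f.vertMap v := by tauto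
          have := hmono edgeGraph (edgeHom A e x y hxy) (collapseHom A v)
            (by
              apply Hom.ext_partMap
              funext p
              rcases p with b | u
              · cases b <;>
                  simp [Hom.comp, collapseHom, edgeHom, f.partMap_vert, hx, hy]
              · simp [Hom.comp, collapseHom, edgeHom, hpq])
          have := congrFun (congrArg Hom.partMap this) (Sum.inr ())
          simpa [collapseHom, edgeHom] using this
        | inr e' =>
          obtain ⟨⟨x, y⟩, hxy⟩ := Quot.exists_rep (A.ψ e)
          have hxy : A.ψ e = s(x, y) := hxy.symm
          obtain ⟨⟨x', y'⟩, hxy'⟩ := Quot.exists_rep (A.ψ e')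
          have hxy' : A.ψ e' = s(x', y') := hxy'.symm
          have hev : s(f.vertMap x, f.vertMap y) = s(f.vertMap x', f.vertMap y') := by
            have h1 := f.incid_partMap (Sum.inr e)
            have h2 := f.incid_partMap (Sum.inr e')
            rw [hpq] at h1
            rw [h1] at h2
            simp only [incid, hxy, hxy', Sym2.map_pair_eq] at h2
            exact h2
          rw [Sym2.eq_iff] at hev
          -- choose endpoints of e' matching those of e under f
          obtain ⟨a, b, hab, hfa, hfb⟩ :
              ∃ a b, A.ψ e' = s(a, b) ∧ f.vertMap a = f.vertMap x ∧
                f.vertMap b = f.vertMap y := by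
            rcases hev with ⟨h1, h2⟩ | ⟨h1, h2⟩
            · exact ⟨x', y', hxy', h1.symm, h2.symm⟩
            · exact ⟨y', x', by rw [hxy', Sym2.eq_swap], h1.symm, h2.symm⟩
          have := hmono edgeGraph (edgeHom A e x y hxy) (edgeHom A e' a b hab)
            (by
              apply Hom.ext_partMap
              funext p
              rcases p with c | u
              · cases c <;> simp [Hom.comp, edgeHom, f.partMap_vert, hfa, hfb]
              · simp [Hom.comp, edgeHom, hpq])
          have := congrFun (congrArg Hom.partMap this) (Sum.inr ())
          simpa [edgeHom] using this
    · -- injective → mono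
      intro hinj C g h hgh
      apply Hom.ext_partMap
      funext p
      exact hinj (congrFun (congrArg Hom.partMap hgh) p)
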